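/- arXiv:2508.00490 — 4 statements merged into one kernel-verified Lean document; each statement's English description precedes it below -/
import Mathlib

section
/- Let 0 < p ≤ 1 and let (M,d) be a metric space with base point 0. Then for all x, y ∈ M one has ‖δ(x) − δ(y)‖_p = d(x,y). (The canonical map δ_{p,M} : M → F_p(M) is an isometric embedding.) -/
open scoped BigOperators Classical

noncomputable section

/-- The point mass `δ(x)` in the free space construction: the indicator function of `{x}`
if `x ≠ base`, and `0` if `x = base`. -/
def freeDelta {M : Type*} (base x : M) : M → ℝ :=
  fun z => if x = base then 0 else if z = x then 1 else 0

/-- The set of admissible quantities `(∑ j |a_j|^p)^{1/p}` arising from expansions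
`μ = ∑ j a_j (δ(x_j) - δ(y_j))/d(x_j, y_j)` with all points `x_j ≠ y_j` lying in `N`. -/
def freeNormSet {M : Type*} [MetricSpace M] (base : M) (N : Set M) (p : ℝ) (μ : M → ℝ) :
    Set ℝ :=
  {r | ∃ (n : ℕ) (a : Fin n → ℝ) (x y : Fin n → M),
    (∀ j, x j ∈ N) ∧ (∀ j, y j ∈ N) ∧ (∀ j, x j ≠ y j) ∧
    μ = (fun z => ∑ j, a j *
      ((freeDelta base (x j) z - freeDelta base (y j) z) / dist (x j) (y j))) ∧
    r = (∑ j, |a j| ^ p) ^ (1 / p)}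

/-- The Lipschitz-free `p`-norm of `μ` computed with expansions supported on `N ⊆ M`. -/
def freeNormOn {M : Type*} [MetricSpace M] (base : M) (N : Set M) (p : ℝ) (μ : M → ℝ) : ℝ :=
  sInf (freeNormSet base N p μ)

/-- The Lipschitz-free `p`-norm of `μ ∈ P(M)`. -/
def freeNorm {M : Type*} [MetricSpace M] (base : M) (p : ℝ) (μ : M → ℝ) : ℝ :=
  freeNormOn base Set.univ p μ



lemma real_rpow_add_le {a b p : ℝ} (ha : 0 ≤ a) (hb : 0 ≤ b) (hp : 0 ≤ p) (hp1 : p ≤ 1) :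
    (a + b) ^ p ≤ a ^ p + b ^ p := by
  lift a to NNReal using ha
  lift b to NNReal using hb
  have := NNReal.rpow_add_le_add_rpow a b hp hp1
  exact_mod_cast this

lemma sum_rpow_ge {ι : Type*} (s : Finset ι) (f : ι → ℝ) (hf : ∀ i, 0 ≤ f i) {p : ℝ}
    (hp0 : 0 < p) (hp1 : p ≤ 1) : (∑ i ∈ s, f i) ^ p ≤ ∑ i ∈ s, f i ^ p := by
  classical
  induction s using Finset.induction_on with
  | empty => simp [Real.zero_rpow hp0.ne']
  | @insert a s h ih =>
    rw [Finset.sum_insert h, Finset.sum_insert h]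
    calc (f a + ∑ i ∈ s, f i) ^ p ≤ f a ^ p + (∑ i ∈ s, f i) ^ p :=
          real_rpow_add_le (hf a) (Finset.sum_nonneg fun i _ => hf i) hp0.le hp1
      _ ≤ f a ^ p + ∑ i ∈ s, f i ^ p := by linarith

lemma delta_pair {M : Type*} [MetricSpace M] (base y : M) (u : M) (S : Finset M)
    (hu : u ∈ S) :
    ∑ z ∈ S, freeDelta base u z * (dist z y - dist base y) = dist u y - dist base y := by
  classical
  unfold freeDelta
  by_cases hb : u = base
  · simp [hb]
  · simp only [hb, if_false, ite_mul, one_mul, zero_mul]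
    rw [Finset.sum_ite_eq' S u (fun z => dist z y - dist base y), if_pos hu]

/-- `‖δ(x) − δ(y)‖_p = d(x,y)`: the canonical map `δ_{p,M} : M → F_p(M)`
is an isometric embedding. -/
theorem delta_isometry {M : Type*} [MetricSpace M] (base : M) (p : ℝ)
    (hp0 : 0 < p) (hp1 : p ≤ 1) (x y : M) :
    freeNorm base p (freeDelta base x - freeDelta base y) = dist x y := by
  classical
  have hrmem : dist x y ∈ freeNormSet base Set.univ p (freeDelta base x - freeDelta base y) := by
    by_cases hxy : x = y
    · subst hxy
      refine ⟨0, Fin.elim0, Fin.elim0, Fin.elim0, (fun j => j.elim0), (fun j => j.elim0),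
        (fun j => j.elim0), ?_, ?_⟩
      · funext z; simp
      · simp only [dist_self, Finset.univ_eq_empty, Finset.sum_empty]
        exact (Real.zero_rpow (one_div_ne_zero hp0.ne')).symm
    · have hd : (0:ℝ) < dist x y := dist_pos.mpr hxy
      refine ⟨1, (fun _ => dist x y), (fun _ => x), (fun _ => y), (fun _ => Set.mem_univ _),
        (fun _ => Set.mem_univ _), (fun _ => hxy), ?_, ?_⟩
      · funext z
        simp only [Fin.sum_univ_one, Pi.sub_apply]
        field_simp
      · rw [Fin.sum_univ_one, abs_of_nonneg dist_nonneg, ← Real.rpow_mul dist_nonneg,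
          mul_one_div_cancel hp0.ne', Real.rpow_one]
  -- every element of the set is ≥ dist x y
  have hlb : ∀ r ∈ freeNormSet base Set.univ p (freeDelta base x - freeDelta base y),
      dist x y ≤ r := by
    rintro r ⟨n, a, xs, ys, -, -, hxy, hμ, rfl⟩
    set f : M → ℝ := fun z => dist z y - dist base y with hf
    set S : Finset M := insert x (insert y
      (Finset.image xs Finset.univ ∪ Finset.image ys Finset.univ)) with hS
    have hxS : x ∈ S := Finset.mem_insert_self _ _
    have hyS : y ∈ S := Finset.mem_insert_of_mem (Finset.mem_insert_self _ _)
    have hxsS : ∀ j, xs j ∈ S := fun j => Finset.mem_insert_of_mem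
      (Finset.mem_insert_of_mem (Finset.mem_union_left _
        (Finset.mem_image_of_mem _ (Finset.mem_univ j))))
    have hysS : ∀ j, ys j ∈ S := fun j => Finset.mem_insert_of_mem
      (Finset.mem_insert_of_mem (Finset.mem_union_right _
        (Finset.mem_image_of_mem _ (Finset.mem_univ j))))
    -- pairing identity
    have key : dist x y = ∑ j, a j * ((f (xs j) - f (ys j)) / dist (xs j) (ys j)) := by
      have hL : ∑ z ∈ S, (freeDelta base x - freeDelta base y) z * f z = dist x y := by
        simp only [hf, Pi.sub_apply, sub_mul, Finset.sum_sub_distrib]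
        rw [delta_pair base y x S hxS, delta_pair base y y S hyS]
        simp [dist_self]
      have hR : ∑ z ∈ S, (freeDelta base x - freeDelta base y) z * f z
          = ∑ j, a j * ((f (xs j) - f (ys j)) / dist (xs j) (ys j)) := by
        rw [hμ]
        simp only
        calc ∑ z ∈ S, (∑ j, a j * ((freeDelta base (xs j) z - freeDelta base (ys j) z)
                / dist (xs j) (ys j))) * f z
            = ∑ j, ∑ z ∈ S, a j * ((freeDelta base (xs j) z - freeDelta base (ys j) z)
                / dist (xs j) (ys j)) * f z := by
              simp_rw [Finset.sum_mul]; exact Finset.sum_comm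
          _ = ∑ j, a j * ((f (xs j) - f (ys j)) / dist (xs j) (ys j)) := by
              refine Finset.sum_congr rfl fun j _ => ?_
              have h1 := delta_pair base y (xs j) S (hxsS j)
              have h2 := delta_pair base y (ys j) S (hysS j)
              have hrw : ∀ z, a j * ((freeDelta base (xs j) z - freeDelta base (ys j) z)
                  / dist (xs j) (ys j)) * f z
                  = (a j / dist (xs j) (ys j)) * (freeDelta base (xs j) z * f z
                    - freeDelta base (ys j) z * f z) := fun z => by ring
              simp only [hrw]; simp only [hf]
              rw [← Finset.mul_sum, Finset.sum_sub_distrib, h1, h2]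
              ring
      rw [← hL, hR]
    have h1 : dist x y ≤ ∑ j, |a j| := by
      calc dist x y = |dist x y| := (abs_of_nonneg dist_nonneg).symm
        _ = |∑ j, a j * ((f (xs j) - f (ys j)) / dist (xs j) (ys j))| := by rw [← key]
        _ ≤ ∑ j, |a j * ((f (xs j) - f (ys j)) / dist (xs j) (ys j))| :=
            Finset.abs_sum_le_sum_abs _ _
        _ ≤ ∑ j, |a j| := by
            refine Finset.sum_le_sum fun j _ => ?_
            have hd : 0 < dist (xs j) (ys j) := dist_pos.mpr (hxy j)
            have hfle : |f (xs j) - f (ys j)| ≤ dist (xs j) (ys j) := by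
              simp only [hf]
              simpa using abs_dist_sub_le (xs j) (ys j) y
            have hq : |(f (xs j) - f (ys j)) / dist (xs j) (ys j)| ≤ 1 := by
              rw [abs_div, abs_of_pos hd]
              exact (div_le_one hd).mpr hfle
            calc |a j * ((f (xs j) - f (ys j)) / dist (xs j) (ys j))|
                = |a j| * |(f (xs j) - f (ys j)) / dist (xs j) (ys j)| := abs_mul _ _
              _ ≤ |a j| * 1 := mul_le_mul_of_nonneg_left hq (abs_nonneg _)
              _ = |a j| := mul_one _
    have h2 : dist x y ^ p ≤ ∑ j, |a j| ^ p :=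
      le_trans (Real.rpow_le_rpow dist_nonneg h1 hp0.le)
        (sum_rpow_ge Finset.univ (fun j => |a j|) (fun j => abs_nonneg _) hp0 hp1)
    calc dist x y = (dist x y ^ p) ^ (1 / p) := by
          rw [← Real.rpow_mul dist_nonneg, mul_one_div_cancel hp0.ne', Real.rpow_one]
      _ ≤ (∑ j, |a j| ^ p) ^ (1 / p) :=
          Real.rpow_le_rpow (Real.rpow_nonneg dist_nonneg p) h2 (by positivity)
  refine le_antisymm (csInf_le ⟨0, fun r hr => ?_⟩ hrmem) (le_csInf ⟨_, hrmem⟩ hlb)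
  obtain ⟨n, a, xs, ys, -, -, -, -, rfl⟩ := hr
  exact Real.rpow_nonneg (Finset.sum_nonneg fun j _ =>
    Real.rpow_nonneg (abs_nonneg _) p) _
end
end

section
/- Let 0 < p ≤ 1, let (M,d) be a metric space with base point 0, let X be a real vector space, and let N : X → ℝ be a p-seminorm on X (i.e., N ≥ 0, N(c·v) = |c|·N(v) for all c ∈ ℝ and v ∈ X, and N(v+w)^p ≤ N(v)^p + N(w)^p for all v, w ∈ X). Let f : M → X satisfy f(0) = 0 and N(f(x) − f(y)) ≤ L·d(x,y) for all x, y ∈ M. Then for every μ ∈ P(M), N(Σ_{x∈M} μ(x)·f(x)) ≤ L·‖μ‖_p. (Every L-Lipschitz map from M into a p-normed space that preserves the base point extends to a linear map of norm at most L on F_p(M).) -/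
open scoped BigOperators Classical

noncomputable section

/-- Finite `p`-subadditivity of a `p`-seminorm. -/
lemma pnorm_sum_le {X : Type*} [AddCommGroup X] [Module ℝ X] (N : X → ℝ) (p : ℝ)
    (hp0 : 0 < p)
    (hNsmul : ∀ (c : ℝ) (v : X), N (c • v) = |c| * N v)
    (hNadd : ∀ v w : X, N (v + w) ^ p ≤ N v ^ p + N w ^ p)
    {ι : Type*} (s : Finset ι) (v : ι → X) :
    N (∑ j ∈ s, v j) ^ p ≤ ∑ j ∈ s, N (v j) ^ p := by
  classical
  have hN0 : N 0 = 0 := by simpa using hNsmul 0 0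
  induction s using Finset.cons_induction with
  | empty => simp [hN0, Real.zero_rpow hp0.ne']
  | cons i s hi ih =>
      rw [Finset.sum_cons, Finset.sum_cons]
      exact (hNadd _ _).trans (by linarith)

/-- The canonical expansion shows `freeNormSet` is nonempty. -/
lemma freeNormSet_nonempty {M : Type*} [MetricSpace M] (base : M) (p : ℝ)
    (μ : M → ℝ) (hfin : (Function.support μ).Finite) (hb : μ base = 0) :
    (freeNormSet base Set.univ p μ).Nonempty := by
  classical
  set s : Finset M := hfin.toFinset with hs
  set n : ℕ := s.card with hn
  set e : {w // w ∈ s} ≃ Fin n := s.equivFin with he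
  have hxsupp : ∀ j : Fin n, μ ((e.symm j : M)) ≠ 0 := by
    intro j
    have h : (e.symm j : M) ∈ hfin.toFinset := (e.symm j).2
    exact (hfin.mem_toFinset).1 h
  have hxb : ∀ j : Fin n, (e.symm j : M) ≠ base := by
    intro j h
    exact hxsupp j (by rw [h]; exact hb)
  refine ⟨_, n, fun j => μ ((e.symm j : M)) * dist ((e.symm j : M)) base,
    fun j => (e.symm j : M), fun _ => base,
    fun _ => trivial, fun _ => trivial, hxb, ?_, rfl⟩
  funext z
  have hDbase : ∀ w, freeDelta base base w = 0 := by intro w; simp [freeDelta]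
  have hterm : ∀ j : Fin n,
      μ ((e.symm j : M)) * dist ((e.symm j : M)) base *
        ((freeDelta base ((e.symm j : M)) z - freeDelta base base z) /
          dist ((e.symm j : M)) base)
      = if z = (e.symm j : M) then μ z else 0 := by
    intro j
    have hd : dist ((e.symm j : M)) base ≠ 0 := by
      simpa [dist_eq_zero] using hxb j
    rw [hDbase, sub_zero]
    unfold freeDelta
    rw [if_neg (hxb j)]
    split_ifs with h
    · subst h; field_simp
    · simp
  rw [Finset.sum_congr rfl (fun j _ => hterm j)]
  have : ∑ j : Fin n, (if z = (e.symm j : M) then μ z else 0)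
      = ∑ w : {w // w ∈ s}, (if z = (w : M) then μ z else 0) :=
    Equiv.sum_comp e.symm (fun w => if z = (w : M) then μ z else 0)
  rw [this, Finset.sum_coe_sort s (fun w => if z = w then μ z else 0),
    Finset.sum_ite_eq s z (fun _ => μ z)]
  split_ifs with h
  · rfl
  · by_contra hμz
    exact h ((hfin.mem_toFinset).2 hμz)

/-- Every element of `freeNormSet` is nonnegative. -/
lemma freeNormSet_nonneg {M : Type*} [MetricSpace M] (base : M) (p : ℝ) (μ : M → ℝ)
    {r : ℝ} (hr : r ∈ freeNormSet base Set.univ p μ) : 0 ≤ r := by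
  obtain ⟨n, a, x, y, -, -, -, -, hr⟩ := hr
  rw [hr]
  positivity

/-- Every `L`-Lipschitz base-point-preserving map from `M` into a
`p`-seminormed space extends to a linear map of norm at most `L` on `F_p(M)`. -/
theorem lipschitz_extension_bound {M : Type*} [MetricSpace M] (base : M) (p : ℝ)
    (hp0 : 0 < p) (hp1 : p ≤ 1)
    (X : Type*) [AddCommGroup X] [Module ℝ X] (N : X → ℝ)
    (hN0 : ∀ v, 0 ≤ N v)
    (hNsmul : ∀ (c : ℝ) (v : X), N (c • v) = |c| * N v)
    (hNadd : ∀ v w : X, N (v + w) ^ p ≤ N v ^ p + N w ^ p)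
    (f : M → X) (L : ℝ) (hf0 : f base = 0)
    (hlip : ∀ x y, N (f x - f y) ≤ L * dist x y)
    (μ : M → ℝ) (hfin : (Function.support μ).Finite) (hb : μ base = 0) :
    N (∑ᶠ x, μ x • f x) ≤ L * freeNorm base p μ := by
  classical
  have hN0' : N 0 = 0 := by simpa using hNsmul 0 0
  set S : X := ∑ᶠ x, μ x • f x with hSdef
  have hne := freeNormSet_nonempty base p μ hfin hb
  have hbdd : BddBelow (freeNormSet base Set.univ p μ) :=
    ⟨0, fun r hr => freeNormSet_nonneg base p μ hr⟩
  -- Key pointwise bound over expansions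
  have key : ∀ r ∈ freeNormSet base Set.univ p μ, N S ≤ L * r := by
    rintro r ⟨n, a, x, y, -, -, hxy, hμ, hr⟩
    have hd : ∀ j, 0 < dist (x j) (y j) := fun j => dist_pos.2 (hxy j)
    rcases Nat.eq_zero_or_pos n with hn | hn
    · -- empty expansion : μ = 0
      subst hn
      have hμ0 : μ = fun _ => (0 : ℝ) := by
        rw [hμ]; funext z; simp
      have hS0 : S = 0 := by
        rw [hSdef, hμ0]
        simp
      rw [hS0, hN0', hr]
      simp only [Finset.univ_eq_empty, Finset.sum_empty]
      rw [Real.zero_rpow (one_div_ne_zero hp0.ne'), mul_zero]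
    · -- nonempty expansion
      have j0 : Fin n := ⟨0, hn⟩
      have hL : 0 ≤ L := by
        have h1 := hlip (x j0) (y j0)
        have h2 := hN0 (f (x j0) - f (y j0))
        nlinarith [hd j0]
      set c : Fin n → ℝ := fun j => a j / dist (x j) (y j) with hc
      set T : Finset M := Finset.image x Finset.univ ∪ Finset.image y Finset.univ with hT
      have hxT : ∀ j, x j ∈ T := fun j => by
        rw [hT]; exact Finset.mem_union_left _ (Finset.mem_image_of_mem x (Finset.mem_univ j))
      have hyT : ∀ j, y j ∈ T := fun j => by
        rw [hT]; exact Finset.mem_union_right _ (Finset.mem_image_of_mem y (Finset.mem_univ j))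
      have hdelz : ∀ (w z : M), z ≠ w → freeDelta base w z = 0 := by
        intro w z hzw
        unfold freeDelta
        simp [hzw]
      have hsupp : Function.support μ ⊆ (T : Set M) := by
        intro z hz
        by_contra hzT
        apply hz
        rw [hμ]
        refine Finset.sum_eq_zero fun j _ => ?_
        rw [hdelz (x j) z (fun h => hzT (h ▸ hxT j)),
          hdelz (y j) z (fun h => hzT (h ▸ hyT j))]
        simp
      -- the delta sums reproduce f
      have hdel : ∀ w ∈ T, ∑ z ∈ T, freeDelta base w z • f z = f w := by
        intro w hw
        by_cases hwb : w = base
        · subst hwb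
          simp [freeDelta, hf0]
        · have h1 : ∀ z ∈ T, freeDelta base w z • f z = if z = w then f w else 0 := by
            intro z _
            unfold freeDelta
            rw [if_neg hwb]
            split_ifs with h
            · subst h; simp
            · simp
          rw [Finset.sum_congr rfl h1, Finset.sum_ite_eq' T w (fun _ => f w), if_pos hw]
      -- compute S as the finite combination
      have hSsum : S = ∑ j, c j • (f (x j) - f (y j)) := by
        have hsupp' : Function.support (fun z => μ z • f z) ⊆ (T : Set M) := by
          intro z hz
          apply hsupp
          intro hμz
          apply hz
          simp [hμz]
        rw [hSdef, finsum_eq_finset_sum_of_support_subset _ hsupp']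
        have step : ∀ j : Fin n,
            c j • (f (x j) - f (y j))
              = ∑ z ∈ T, (a j * ((freeDelta base (x j) z - freeDelta base (y j) z) /
                  dist (x j) (y j))) • f z := by
          intro j
          rw [← hdel (x j) (hxT j), ← hdel (y j) (hyT j), ← Finset.sum_sub_distrib,
            Finset.smul_sum, Finset.sum_congr rfl]
          intro z _
          rw [← sub_smul, smul_smul]
          congr 1
          rw [hc]
          field_simp
        rw [Finset.sum_congr rfl (fun j _ => step j), Finset.sum_comm]
        refine Finset.sum_congr rfl fun z _ => ?_
        rw [hμ]
        rw [Finset.sum_smul]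
      -- p-power estimate
      have habs : ∀ j, |c j| * (L * dist (x j) (y j)) = L * |a j| := by
        intro j
        rw [hc]
        rw [abs_div, abs_of_pos (hd j)]
        have hdne : dist (x j) (y j) ≠ 0 := (hd j).ne'
        field_simp
      have h2 : N S ^ p ≤ L ^ p * ∑ j, |a j| ^ p := by
        rw [hSsum]
        calc N (∑ j, c j • (f (x j) - f (y j))) ^ p
            ≤ ∑ j, N (c j • (f (x j) - f (y j))) ^ p :=
              pnorm_sum_le N p hp0 hNsmul hNadd _ _
          _ ≤ ∑ j, L ^ p * |a j| ^ p := by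
              refine Finset.sum_le_sum fun j _ => ?_
              rw [hNsmul]
              have hle : |c j| * N (f (x j) - f (y j)) ≤ L * |a j| := by
                rw [← habs j]
                exact mul_le_mul_of_nonneg_left (hlip (x j) (y j)) (abs_nonneg _)
              calc (|c j| * N (f (x j) - f (y j))) ^ p ≤ (L * |a j|) ^ p :=
                    Real.rpow_le_rpow (mul_nonneg (abs_nonneg _) (hN0 _)) hle hp0.le
                _ = L ^ p * |a j| ^ p := Real.mul_rpow hL (abs_nonneg _)
          _ = L ^ p * ∑ j, |a j| ^ p := by rw [Finset.mul_sum]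
      -- take p-th roots
      have hsum_nonneg : (0 : ℝ) ≤ ∑ j, |a j| ^ p :=
        Finset.sum_nonneg fun j _ => Real.rpow_nonneg (abs_nonneg _) _
      have e1 : (N S ^ p) ^ (1 / p) = N S := by
        rw [← Real.rpow_mul (hN0 _), mul_one_div, div_self hp0.ne', Real.rpow_one]
      have e2 : (L ^ p * ∑ j, |a j| ^ p) ^ (1 / p)
          = L * (∑ j, |a j| ^ p) ^ (1 / p) := by
        rw [Real.mul_rpow (Real.rpow_nonneg hL p) hsum_nonneg, ← Real.rpow_mul hL,
          mul_one_div, div_self hp0.ne', Real.rpow_one]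
      calc N S = (N S ^ p) ^ (1 / p) := e1.symm
        _ ≤ (L ^ p * ∑ j, |a j| ^ p) ^ (1 / p) :=
            Real.rpow_le_rpow (Real.rpow_nonneg (hN0 _) _) h2 (by positivity)
        _ = L * (∑ j, |a j| ^ p) ^ (1 / p) := e2
        _ = L * r := by rw [hr]
  -- conclude
  by_cases hL : 0 ≤ L
  · rcases eq_or_lt_of_le hL with h0 | hLpos
    · obtain ⟨r0, hr0⟩ := hne
      have h := key r0 hr0
      rw [← h0, zero_mul] at h ⊢
      exact h
    · have h1 : N S / L ≤ sInf (freeNormSet base Set.univ p μ) := by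
        refine le_csInf hne fun r hr => ?_
        rw [div_le_iff₀ hLpos, mul_comm]
        exact key r hr
      calc N S = L * (N S / L) := by field_simp
        _ ≤ L * sInf (freeNormSet base Set.univ p μ) :=
            mul_le_mul_of_nonneg_left h1 hLpos.le
  · -- L < 0 : then μ = 0
    push_neg at hL
    have hμ0 : ∀ z, μ z = 0 := by
      intro z
      by_cases hz : z = base
      · rw [hz]; exact hb
      · exfalso
        have h1 := hlip z base
        have h2 := hN0 (f z - f base)
        have h3 : 0 < dist z base := dist_pos.2 hz
        nlinarith
    have hS0 : S = 0 := by
      rw [hSdef]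
      have : (fun x => μ x • f x) = fun _ => (0 : X) := by
        funext z; rw [hμ0 z]; simp
      rw [this]
      simp
    have h0mem : (0 : ℝ) ∈ freeNormSet base Set.univ p μ := by
      refine ⟨0, fun j => j.elim0, fun j => j.elim0, fun j => j.elim0,
        fun j => j.elim0, fun j => j.elim0, fun j => j.elim0, ?_, ?_⟩
      · funext z; rw [hμ0 z]; simp
      · simp only [Finset.univ_eq_empty, Finset.sum_empty]
        rw [Real.zero_rpow (one_div_ne_zero hp0.ne')]
    have hinf0 : sInf (freeNormSet base Set.univ p μ) = 0 :=
      le_antisymm (csInf_le hbdd h0mem)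
        (le_csInf hne fun r hr => freeNormSet_nonneg base p μ hr)
    rw [hS0, hN0', freeNorm, freeNormOn, hinf0, mul_zero]
end
end

section
/- Let 0 < p ≤ 1 and let (M,d) be a metric space with base point 0. Then there exist a real vector space X, a p-norm N on X (i.e., N ≥ 0, N(c·v) = |c|·N(v), N(v+w)^p ≤ N(v)^p + N(w)^p, and N(v) = 0 implies v = 0) and a map f : M → X with f(0) = 0 and N(f(x) − f(y)) ≤ d(x,y) for all x, y ∈ M, such that for every μ ∈ P(M) one has N(Σ_{x∈M} μ(x)·f(x)) = ‖μ‖_p. (Hence ‖μ‖_p equals the supremum of ‖Σ_x μ(x) f(x)‖_X over all p-normed spaces X and all 1-Lipschitz base-point-preserving maps f : M → X.) -/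
open scoped BigOperators Classical

noncomputable section

open scoped NNReal Pointwise

set_option linter.unusedSectionVars false

/-! ### Auxiliary real-power lemmas -/

lemma myRealAddRpowLe {p a b : ℝ} (hp0 : 0 < p) (hp1 : p ≤ 1) (ha : 0 ≤ a) (hb : 0 ≤ b) :
    (a + b) ^ p ≤ a ^ p + b ^ p := by
  rw [← Real.coe_toNNReal a ha, ← Real.coe_toNNReal b hb, ← NNReal.coe_add,
    ← NNReal.coe_rpow, ← NNReal.coe_rpow, ← NNReal.coe_rpow, ← NNReal.coe_add, NNReal.coe_le_coe]
  exact NNReal.rpow_add_le_add_rpow _ _ hp0.le hp1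

lemma mySumRpowLe {p : ℝ} (hp0 : 0 < p) (hp1 : p ≤ 1) {ι : Type*} (s : Finset ι)
    (f : ι → ℝ) (hf : ∀ i ∈ s, 0 ≤ f i) :
    (∑ i ∈ s, f i) ^ p ≤ ∑ i ∈ s, f i ^ p := by
  induction s using Finset.cons_induction with
  | empty => simp [Real.zero_rpow hp0.ne']
  | cons i s his ih =>
    rw [Finset.sum_cons, Finset.sum_cons]
    have h1 : 0 ≤ f i := hf i (Finset.mem_cons_self _ _)
    have h2 : ∀ j ∈ s, 0 ≤ f j := fun j hj => hf j (Finset.mem_cons_of_mem hj)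
    calc (f i + ∑ j ∈ s, f j) ^ p ≤ f i ^ p + (∑ j ∈ s, f j) ^ p :=
          myRealAddRpowLe hp0 hp1 h1 (Finset.sum_nonneg h2)
      _ ≤ f i ^ p + ∑ j ∈ s, f j ^ p := by
          exact add_le_add (le_refl _) (ih h2)

lemma mySumAbsLe {p : ℝ} (hp0 : 0 < p) (hp1 : p ≤ 1) {n : ℕ} (a : Fin n → ℝ) :
    ∑ j, |a j| ≤ (∑ j, |a j| ^ p) ^ (1 / p) := by
  have hnn : (0:ℝ) ≤ ∑ j, |a j| := Finset.sum_nonneg fun j _ => abs_nonneg _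
  have h1 := mySumRpowLe hp0 hp1 Finset.univ (fun j => |a j|) (fun i _ => abs_nonneg _)
  have h2 : (∑ j, |a j|) = ((∑ j, |a j|) ^ p) ^ (1/p) := by
    rw [one_div, Real.rpow_rpow_inv hnn hp0.ne']
  rw [h2]
  apply Real.rpow_le_rpow (Real.rpow_nonneg hnn _) h1 (by positivity)

lemma mySInfRpowImage {p : ℝ} (hp0 : 0 < p) {S : Set ℝ} (hS : S.Nonempty)
    (h0 : ∀ x ∈ S, 0 ≤ x) :
    sInf ((· ^ p) '' S) = (sInf S) ^ p := by
  have hbd : BddBelow S := ⟨0, h0⟩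
  have hm : Monotone (fun x : ℝ => (max x 0) ^ p) := fun x y h =>
    Real.rpow_le_rpow (le_max_right x 0) (max_le_max h le_rfl) hp0.le
  have hc : ContinuousAt (fun x : ℝ => (max x 0) ^ p) (sInf S) := by
    have hg : ContinuousAt (fun y : ℝ => y ^ p) (max (sInf S) 0) :=
      Real.continuousAt_rpow_const _ _ (Or.inr hp0.le)
    have hf : ContinuousAt (fun x : ℝ => max x 0) (sInf S) :=
      continuousAt_id.max continuousAt_const
    exact ContinuousAt.comp (f := fun x : ℝ => max x 0) (x := sInf S) hg hf
  have hmap := hm.map_csInf_of_continuousAt hc hS hbd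
  have h1 : max (sInf S) 0 = sInf S := max_eq_left (le_csInf hS h0)
  have h2 : (fun x : ℝ => (max x 0) ^ p) '' S = (· ^ p) '' S :=
    Set.image_congr fun x hx => by rw [max_eq_left (h0 x hx)]
  rw [h1, h2] at hmap
  exact hmap.symm

/-! ### Properties of `freeNormSet` -/

section FreeSet

variable {M : Type*} [MetricSpace M] {base : M} {p : ℝ}

lemma myFreeNormSet_nonneg {μ : M → ℝ} : ∀ r ∈ freeNormSet base Set.univ p μ, 0 ≤ r := by
  rintro r ⟨n, a, x, y, -, -, -, -, rfl⟩
  positivity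

lemma myFreeNormSet_bddBelow {μ : M → ℝ} : BddBelow (freeNormSet base Set.univ p μ) :=
  ⟨0, fun _ hr => myFreeNormSet_nonneg _ hr⟩

lemma myFreeNorm_nonneg (μ : M → ℝ) : 0 ≤ freeNorm base p μ :=
  Real.sInf_nonneg fun _ hr => myFreeNormSet_nonneg _ hr

lemma myZeroMem (hp0 : 0 < p) : (0:ℝ) ∈ freeNormSet base Set.univ p (0 : M → ℝ) := by
  refine ⟨0, Fin.elim0, Fin.elim0, Fin.elim0, fun j => j.elim0, fun j => j.elim0,
    fun j => j.elim0, ?_, ?_⟩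
  · funext z; simp
  · simp [one_div, Real.zero_rpow (inv_ne_zero hp0.ne')]

lemma myFreeNorm_zero (hp0 : 0 < p) : freeNorm base p (0 : M → ℝ) = 0 :=
  le_antisymm (csInf_le myFreeNormSet_bddBelow (myZeroMem hp0)) (myFreeNorm_nonneg _)

lemma mySumFreeDelta {μ : M → ℝ} (h0 : μ base = 0) (s : Finset M)
    (hs : Function.support μ ⊆ s) :
    (fun z => ∑ x ∈ s, μ x * freeDelta base x z) = μ := by
  funext z
  have hterm : ∀ x ∈ s, μ x * freeDelta base x z = if z = x then μ x else 0 := by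
    intro x _
    by_cases hxb : x = base
    · subst hxb
      simp [freeDelta, h0]
    · simp [freeDelta, hxb, mul_ite]
  rw [Finset.sum_congr rfl hterm, Finset.sum_ite_eq s z μ]
  by_cases hz : z ∈ s
  · simp [hz]
  · simp only [hz, if_false]
    by_contra h
    exact hz (hs (Ne.symm h))

lemma myFreeNormSet_nonempty {μ : M → ℝ} (hμ : (Function.support μ).Finite)
    (h0 : μ base = 0) : (freeNormSet base Set.univ p μ).Nonempty := by
  classical
  set s : Finset M := hμ.toFinset with hsdef
  have hsupp : Function.support μ ⊆ s := by
    intro z hz; simpa [hsdef] using hz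
  set n : ℕ := s.card
  set e : Fin n ≃ {x // x ∈ s} := s.equivFin.symm
  have hmem : ∀ j : Fin n, (e j : M) ∈ s := fun j => (e j).2
  have hne : ∀ j : Fin n, (e j : M) ≠ base := by
    intro j hb
    have h2 : ((e j : M)) ∈ Function.support μ := hμ.mem_toFinset.mp (hmem j)
    rw [hb] at h2
    exact h2 h0
  refine ⟨_, n, fun j => μ (e j) * dist (e j : M) base, fun j => (e j : M), fun j => base,
    fun j => trivial, fun j => trivial, hne, ?_, rfl⟩
  have hterm : ∀ (z : M) (j : Fin n),
      (μ (e j) * dist (e j : M) base) *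
        ((freeDelta base (e j : M) z - freeDelta base base z) / dist (e j : M) base)
      = μ (e j) * freeDelta base (e j : M) z := by
    intro z j
    have hd : dist (e j : M) base ≠ 0 := by
      simpa [dist_eq_zero] using hne j
    have hbb : freeDelta base base z = 0 := by simp [freeDelta]
    rw [hbb]
    field_simp
    ring
  funext z
  have h1 : (∑ j : Fin n, (μ (e j) * dist (e j : M) base) *
      ((freeDelta base (e j : M) z - freeDelta base base z) / dist (e j : M) base))
      = ∑ x ∈ s, μ x * freeDelta base x z := by
    rw [Finset.sum_congr rfl (fun j _ => hterm z j),
      Equiv.sum_comp e (fun x : {x // x ∈ s} => μ (x : M) * freeDelta base (x : M) z),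
      Finset.sum_coe_sort s (fun x => μ x * freeDelta base x z)]
  exact ((congrFun (mySumFreeDelta h0 s hsupp) z).symm.trans h1.symm)

end FreeSet

section FreeSet2

variable {M : Type*} [MetricSpace M] {base : M} {p : ℝ}

lemma myDual {μ : M → ℝ} (hp0 : 0 < p) (hp1 : p ≤ 1) {r : ℝ}
    (hr : r ∈ freeNormSet base Set.univ p μ)
    (g : M → ℝ) (hg0 : g base = 0) (hg : ∀ a b, |g a - g b| ≤ dist a b)
    (t : Finset M) (ht : Function.support μ ⊆ t) :
    |∑ z ∈ t, μ z * g z| ≤ r := by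
  classical
  obtain ⟨n, a, x, y, -, -, hxy, hμeq, rfl⟩ := hr
  set t' : Finset M := t ∪ Finset.image x Finset.univ ∪ Finset.image y Finset.univ with ht'
  have htt' : t ⊆ t' := by intro z hz; simp [ht', hz]
  have hxt' : ∀ j, x j ∈ t' := fun j => by
    simp only [ht', Finset.mem_union, Finset.mem_image]
    exact Or.inl (Or.inr ⟨j, Finset.mem_univ j, rfl⟩)
  have hyt' : ∀ j, y j ∈ t' := fun j => by
    simp only [ht', Finset.mem_union, Finset.mem_image]
    exact Or.inr ⟨j, Finset.mem_univ j, rfl⟩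
  have hsum : ∑ z ∈ t, μ z * g z = ∑ z ∈ t', μ z * g z := by
    apply Finset.sum_subset htt'
    intro z _ hzt
    have hz0 : μ z = 0 := by
      by_contra h
      exact hzt (ht h)
    simp [hz0]
  have hdelta : ∀ x0 ∈ t', ∑ z ∈ t', freeDelta base x0 z * g z = g x0 := by
    intro x0 hx0
    by_cases hb : x0 = base
    · subst hb; simp [freeDelta, hg0]
    · have hterm : ∀ z ∈ t', freeDelta base x0 z * g z = if z = x0 then g z else 0 := by
        intro z _
        simp [freeDelta, hb, ite_mul]
      rw [Finset.sum_congr rfl hterm, Finset.sum_ite_eq' t' x0 g, if_pos hx0]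
  have hinner : ∀ j, (∑ z ∈ t', (a j * ((freeDelta base (x j) z - freeDelta base (y j) z)
      / dist (x j) (y j))) * g z)
      = (a j / dist (x j) (y j)) * (g (x j) - g (y j)) := by
    intro j
    have hterm : ∀ z, (a j * ((freeDelta base (x j) z - freeDelta base (y j) z)
        / dist (x j) (y j))) * g z
        = (a j / dist (x j) (y j)) * (freeDelta base (x j) z * g z)
          - (a j / dist (x j) (y j)) * (freeDelta base (y j) z * g z) := by
      intro z; ring
    rw [Finset.sum_congr rfl (fun z _ => hterm z), Finset.sum_sub_distrib,
      ← Finset.mul_sum, ← Finset.mul_sum, hdelta _ (hxt' j), hdelta _ (hyt' j)]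
    ring
  rw [hsum, hμeq]
  have hswap : (∑ z ∈ t', (∑ j, a j * ((freeDelta base (x j) z - freeDelta base (y j) z)
      / dist (x j) (y j))) * g z)
      = ∑ j, (a j / dist (x j) (y j)) * (g (x j) - g (y j)) := by
    simp_rw [Finset.sum_mul]
    rw [Finset.sum_comm]
    exact Finset.sum_congr rfl (fun j _ => hinner j)
  rw [hswap]
  calc |∑ j, (a j / dist (x j) (y j)) * (g (x j) - g (y j))|
      ≤ ∑ j, |(a j / dist (x j) (y j)) * (g (x j) - g (y j))| :=
        Finset.abs_sum_le_sum_abs _ _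
    _ ≤ ∑ j, |a j| := by
        apply Finset.sum_le_sum
        intro j _
        have hd : 0 < dist (x j) (y j) := dist_pos.mpr (hxy j)
        rw [abs_mul, abs_div, abs_of_nonneg dist_nonneg]
        calc |a j| / dist (x j) (y j) * |g (x j) - g (y j)|
            ≤ |a j| / dist (x j) (y j) * dist (x j) (y j) := by
              apply mul_le_mul_of_nonneg_left (hg _ _) (by positivity)
          _ = |a j| := div_mul_cancel₀ _ hd.ne'
    _ ≤ (∑ j, |a j| ^ p) ^ (1 / p) := mySumAbsLe hp0 hp1 a

lemma mySmulMem (hp0 : 0 < p) {μ : M → ℝ} {r : ℝ}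
    (hr : r ∈ freeNormSet base Set.univ p μ) (c : ℝ) :
    |c| * r ∈ freeNormSet base Set.univ p (c • μ) := by
  obtain ⟨n, a, x, y, h1, h2, h3, hμeq, rfl⟩ := hr
  refine ⟨n, fun j => c * a j, x, y, h1, h2, h3, ?_, ?_⟩
  · funext z
    have hz := congrFun hμeq z
    simp only [Pi.smul_apply, smul_eq_mul, hz, Finset.mul_sum]
    exact Finset.sum_congr rfl fun j _ => by ring
  · have habs : ∀ j : Fin n, |c * a j| ^ p = |c| ^ p * |a j| ^ p := by
      intro j
      rw [abs_mul, Real.mul_rpow (abs_nonneg _) (abs_nonneg _)]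
    rw [Finset.sum_congr rfl (fun j _ => habs j), ← Finset.mul_sum,
      Real.mul_rpow (by positivity) (by positivity), one_div,
      Real.rpow_rpow_inv (abs_nonneg c) hp0.ne']

lemma myFreeNorm_smul (hp0 : 0 < p) (μ : M → ℝ) (c : ℝ) :
    freeNorm base p (c • μ) = |c| * freeNorm base p μ := by
  rcases eq_or_ne c 0 with rfl | hc
  · simp [myFreeNorm_zero hp0]
  · have himage : freeNormSet base Set.univ p (c • μ)
        = |c| • freeNormSet base Set.univ p μ := by
      apply Set.Subset.antisymm
      · intro r hr
        have h1 := mySmulMem hp0 hr c⁻¹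
        rw [inv_smul_smul₀ hc] at h1
        refine ⟨|c⁻¹| * r, h1, ?_⟩
        show |c| • (|c⁻¹| * r) = r
        rw [smul_eq_mul, abs_inv]
        field_simp
      · rintro _ ⟨r, hr, rfl⟩
        simpa [smul_eq_mul] using mySmulMem hp0 hr c
    simp only [freeNorm, freeNormOn]
    rw [himage, Real.sInf_smul_of_nonneg (abs_nonneg c), smul_eq_mul]

lemma myAddMem (hp0 : 0 < p) {μ ν : M → ℝ} {r t : ℝ}
    (hr : r ∈ freeNormSet base Set.univ p μ) (ht : t ∈ freeNormSet base Set.univ p ν) :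
    (r ^ p + t ^ p) ^ (1/p) ∈ freeNormSet base Set.univ p (μ + ν) := by
  obtain ⟨n, a, x, y, -, -, h3, hμeq, rfl⟩ := hr
  obtain ⟨m, b, u, v, -, -, h3', hνeq, rfl⟩ := ht
  refine ⟨n + m, Fin.append a b, Fin.append x u, Fin.append y v, fun j => trivial,
    fun j => trivial, ?_, ?_, ?_⟩
  · intro j
    refine Fin.addCases (fun i => ?_) (fun i => ?_) j
    · simp only [Fin.append_left]
      exact h3 i
    · simp only [Fin.append_right]
      exact h3' i
  · funext z
    have h1 := congrFun hμeq z
    have h2 := congrFun hνeq z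
    show μ z + ν z = _
    rw [h1, h2, Fin.sum_univ_add]
    congr 1
    · exact Finset.sum_congr rfl fun i _ => by
        simp [Fin.append_left]
    · exact Finset.sum_congr rfl fun i _ => by
        simp [Fin.append_right]
  · have hr' : ((∑ j, |a j| ^ p) ^ ((1:ℝ)/p)) ^ p = ∑ j, |a j| ^ p := by
      rw [one_div, Real.rpow_inv_rpow (by positivity) hp0.ne']
    have ht' : ((∑ j, |b j| ^ p) ^ ((1:ℝ)/p)) ^ p = ∑ j, |b j| ^ p := by
      rw [one_div, Real.rpow_inv_rpow (by positivity) hp0.ne']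
    rw [hr', ht', Fin.sum_univ_add]
    congr 2
    · exact Finset.sum_congr rfl fun i _ => by simp [Fin.append_left]
    · exact Finset.sum_congr rfl fun i _ => by simp [Fin.append_right]

lemma myFreeNorm_add (hp0 : 0 < p) {μ ν : M → ℝ}
    (hμ : (Function.support μ).Finite) (h0μ : μ base = 0)
    (hν : (Function.support ν).Finite) (h0ν : ν base = 0) :
    freeNorm base p (μ + ν) ^ p ≤ freeNorm base p μ ^ p + freeNorm base p ν ^ p := by
  have hneμ := myFreeNormSet_nonempty (p := p) hμ h0μ
  have hneν := myFreeNormSet_nonempty (p := p) hν h0ν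
  have key : ∀ r ∈ freeNormSet base Set.univ p μ, ∀ t ∈ freeNormSet base Set.univ p ν,
      freeNorm base p (μ + ν) ^ p ≤ r ^ p + t ^ p := by
    intro r hr t ht
    have hmem := myAddMem hp0 hr ht
    have h1 : freeNorm base p (μ + ν) ≤ (r ^ p + t ^ p) ^ (1/p) :=
      csInf_le myFreeNormSet_bddBelow hmem
    have h2 := Real.rpow_le_rpow (myFreeNorm_nonneg _) h1 hp0.le
    have h3 : 0 ≤ r ^ p + t ^ p := by
      have hr0 := myFreeNormSet_nonneg r hr
      have ht0 := myFreeNormSet_nonneg t ht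
      positivity
    rwa [one_div, Real.rpow_inv_rpow h3 hp0.ne'] at h2
  have step1 : ∀ t ∈ freeNormSet base Set.univ p ν,
      freeNorm base p (μ + ν) ^ p - t ^ p ≤ freeNorm base p μ ^ p := by
    intro t ht
    have heq : freeNorm base p μ ^ p = sInf ((· ^ p) '' freeNormSet base Set.univ p μ) :=
      (mySInfRpowImage hp0 hneμ (fun x hx => myFreeNormSet_nonneg x hx)).symm
    rw [heq]
    apply le_csInf (hneμ.image _)
    rintro _ ⟨r, hr, rfl⟩
    linarith [key r hr t ht]
  have step2 : freeNorm base p (μ + ν) ^ p - freeNorm base p μ ^ p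
      ≤ freeNorm base p ν ^ p := by
    have heq : freeNorm base p ν ^ p = sInf ((· ^ p) '' freeNormSet base Set.univ p ν) :=
      (mySInfRpowImage hp0 hneν (fun x hx => myFreeNormSet_nonneg x hx)).symm
    rw [heq]
    apply le_csInf (hneν.image _)
    rintro _ ⟨t, ht, rfl⟩
    linarith [step1 t ht]
  linarith

lemma myNormZero (hp0 : 0 < p) (hp1 : p ≤ 1) {μ : M → ℝ}
    (hμ : (Function.support μ).Finite) (h0 : μ base = 0)
    (hnorm : freeNorm base p μ = 0) : μ = 0 := by
  by_contra hne
  obtain ⟨x0, hx0⟩ : ∃ x0, μ x0 ≠ 0 := by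
    by_contra h; push_neg at h; exact hne (funext fun z => h z)
  have hx0b : x0 ≠ base := fun h => hx0 (h ▸ h0)
  classical
  set s : Finset M := hμ.toFinset with hs
  have hx0s : x0 ∈ s := hμ.mem_toFinset.mpr hx0
  set s' : Finset M := insert base (s.erase x0) with hs'
  have hs'ne : s'.Nonempty := ⟨base, Finset.mem_insert_self _ _⟩
  set ε : ℝ := s'.inf' hs'ne (fun z => dist z x0) with hε
  have hεpos : 0 < ε := by
    rw [hε, Finset.lt_inf'_iff]
    intro z hz
    rw [dist_pos]
    rcases Finset.mem_insert.mp hz with h | h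
    · subst h
      exact fun hzx => hx0b hzx.symm
    · exact Finset.ne_of_mem_erase h
  have hεle : ∀ z ∈ s', ε ≤ dist z x0 := fun z hz => Finset.inf'_le _ hz
  set g : M → ℝ := fun z => max (ε - dist z x0) 0 with hg
  have hg0 : g base = 0 := by
    rw [hg]
    apply max_eq_right
    have := hεle base (Finset.mem_insert_self _ _)
    linarith
  have hglip : ∀ a b, |g a - g b| ≤ dist a b := by
    intro a b
    have hrw : (ε - dist a x0) - (ε - dist b x0) = dist b x0 - dist a x0 := by ring
    calc |g a - g b| ≤ |(ε - dist a x0) - (ε - dist b x0)| := abs_max_sub_max_le_abs _ _ _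
      _ = |dist b x0 - dist a x0| := by rw [hrw]
      _ ≤ dist b a := abs_dist_sub_le _ _ _
      _ = dist a b := dist_comm _ _
  have hpair : ∑ z ∈ s, μ z * g z = μ x0 * ε := by
    rw [Finset.sum_eq_single x0]
    · congr 1
      rw [hg]
      simp only [dist_self, sub_zero]
      exact max_eq_left hεpos.le
    · intro z hzs hzx
      have hz' : z ∈ s' := Finset.mem_insert_of_mem (Finset.mem_erase.mpr ⟨hzx, hzs⟩)
      have hgz : g z = 0 := by
        rw [hg]
        apply max_eq_right
        linarith [hεle z hz']
      simp [hgz]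
    · intro h; exact absurd hx0s h
  have hbound : ∀ r ∈ freeNormSet base Set.univ p μ, |μ x0 * ε| ≤ r := by
    intro r hr
    rw [← hpair]
    exact myDual hp0 hp1 hr g hg0 hglip s (fun z hz => hμ.mem_toFinset.mpr hz)
  have hle : |μ x0 * ε| ≤ freeNorm base p μ :=
    le_csInf (myFreeNormSet_nonempty hμ h0) hbound
  rw [hnorm] at hle
  have hpos : 0 < |μ x0 * ε| := abs_pos.mpr (mul_ne_zero hx0 hεpos.ne')
  linarith

end FreeSet2

universe u

/-- A real vector space equipped with a `p`-norm. -/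
structure PNormedSpace (p : ℝ) : Type (u + 1) where
  carrier : Type u
  [grp : AddCommGroup carrier]
  [mod : Module ℝ carrier]
  pnorm : carrier → ℝ
  pnorm_nonneg : ∀ v, 0 ≤ pnorm v
  pnorm_smul : ∀ (c : ℝ) (v : carrier), pnorm (c • v) = |c| * pnorm v
  pnorm_add : ∀ v w : carrier, pnorm (v + w) ^ p ≤ pnorm v ^ p + pnorm w ^ p
  pnorm_eq_zero : ∀ v, pnorm v = 0 → v = 0

attribute [instance] PNormedSpace.grp PNormedSpace.mod


def myV (M : Type u) [MetricSpace M] (base : M) : Submodule ℝ (M → ℝ) where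
  carrier := {μ | (Function.support μ).Finite ∧ μ base = 0}
  add_mem' := fun {μ} {ν} hμ hν =>
    ⟨((hμ.1.union hν.1).subset (Function.support_add _ _)), by
      simp only [Pi.add_apply, hμ.2, hν.2, add_zero]⟩
  zero_mem' := ⟨by simp, rfl⟩
  smul_mem' := fun c μ hμ =>
    ⟨hμ.1.subset (Function.support_const_smul_subset c μ), by
      simp only [Pi.smul_apply, hμ.2, smul_eq_mul, mul_zero]⟩

lemma myV_fin {M : Type u} [MetricSpace M] {base : M} (v : myV M base) :
    (Function.support (v : M → ℝ)).Finite := v.2.1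

lemma myV_zero {M : Type u} [MetricSpace M] {base : M} (v : myV M base) :
    (v : M → ℝ) base = 0 := v.2.2

def myW (M : Type u) [MetricSpace M] (base : M) (p : ℝ) (hp0 : 0 < p) (hp1 : p ≤ 1) :
    PNormedSpace.{u} p where
  carrier := myV M base
  pnorm := fun v => freeNorm base p (v : M → ℝ)
  pnorm_nonneg := fun _ => myFreeNorm_nonneg _
  pnorm_smul := fun c v => by
    have h := myFreeNorm_smul (base := base) hp0 (v : M → ℝ) c
    rwa [← Submodule.coe_smul c v] at h
  pnorm_add := fun v w => by
    have h := myFreeNorm_add (base := base) hp0 (myV_fin v) (myV_zero v)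
      (myV_fin w) (myV_zero w)
    rwa [← Submodule.coe_add v w] at h
  pnorm_eq_zero := fun v hv => Subtype.ext (myNormZero hp0 hp1 (myV_fin v) (myV_zero v) hv)

/-- There is a `p`-normed space `X` and a `1`-Lipschitz base-point
preserving map `f : M → X` realizing `‖μ‖_p` as `N(∑ₓ μ(x) f(x))` for every `μ ∈ P(M)`;
hence `‖·‖_p` is the supremum in the defining formula of the free `p`-space. -/
theorem exists_realizing_pNormedSpace {M : Type u} [MetricSpace M] (base : M) (p : ℝ)
    (hp0 : 0 < p) (hp1 : p ≤ 1) :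
    ∃ (W : PNormedSpace.{u} p) (f : M → W.carrier),
      f base = 0 ∧ (∀ x y, W.pnorm (f x - f y) ≤ dist x y) ∧
      ∀ μ : M → ℝ, (Function.support μ).Finite → μ base = 0 →
        W.pnorm (∑ᶠ x, μ x • f x) = freeNorm base p μ := by
  classical
  have hfin_delta : ∀ x : M, (Function.support (freeDelta base x)).Finite := by
    intro x
    apply (Set.finite_singleton x).subset
    intro z hz
    simp only [Function.mem_support, freeDelta] at hz
    by_cases hxb : x = base
    · simp [hxb] at hz
    · simp only [hxb, if_false] at hz
      by_cases hzx : z = x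
      · simp [hzx]
      · simp [hzx] at hz
  have hzero_delta : ∀ x : M, freeDelta base x base = 0 := by
    intro x
    by_cases hxb : x = base
    · simp [freeDelta, hxb]
    · simp [freeDelta, hxb, Ne.symm hxb]
  have hmem_delta : ∀ x : M, freeDelta base x ∈ myV M base := fun x =>
    ⟨hfin_delta x, hzero_delta x⟩
  set f : M → myV M base := fun x => ⟨freeDelta base x, hmem_delta x⟩ with hf
  refine ⟨myW M base p hp0 hp1, f, ?_, ?_, ?_⟩
  · apply Subtype.ext
    funext z
    simp [hf, freeDelta]
    rfl
  · intro x y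
    rcases eq_or_ne x y with rfl | hxy
    · show freeNorm base p ((f x - f x : myV M base) : M → ℝ) ≤ dist x x
      rw [show ((f x - f x : myV M base) : M → ℝ) = 0 by simp, myFreeNorm_zero hp0,
        dist_self]
    · show freeNorm base p ((f x - f y : myV M base) : M → ℝ) ≤ dist x y
      apply csInf_le myFreeNormSet_bddBelow
      refine ⟨1, fun _ => dist x y, fun _ => x, fun _ => y, fun _ => trivial,
        fun _ => trivial, fun _ => hxy, ?_, ?_⟩
      · funext z
        show freeDelta base x z - freeDelta base y z = _
        rw [Fin.sum_univ_one]
        have hd : dist x y ≠ 0 := dist_ne_zero.mpr hxy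
        field_simp
      · rw [Fin.sum_univ_one, abs_of_nonneg dist_nonneg, one_div,
          Real.rpow_rpow_inv dist_nonneg hp0.ne']
  · intro μ hfin h0
    have hss : Function.support (fun x => μ x • f x) ⊆ ↑hfin.toFinset := by
      intro x hx
      have hx' : μ x ≠ 0 := by
        simp only [Function.mem_support] at hx
        intro h
        apply hx
        rw [h, zero_smul]
      exact hfin.mem_toFinset.mpr hx'
    have hfe : (∑ᶠ x, μ x • f x) = ∑ x ∈ hfin.toFinset, μ x • f x :=
      finsum_eq_sum_of_support_subset _ hss
    have hval : ((∑ x ∈ hfin.toFinset, μ x • f x : myV M base) : M → ℝ) = μ := by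
      have hc : ((∑ x ∈ hfin.toFinset, μ x • f x : myV M base) : M → ℝ)
          = ∑ x ∈ hfin.toFinset, ((μ x • f x : myV M base) : M → ℝ) :=
        map_sum (myV M base).subtype _ _
      rw [hc]
      funext z
      rw [Finset.sum_apply]
      have hterm : ∀ x ∈ hfin.toFinset, ((μ x • f x : myV M base) : M → ℝ) z
          = μ x * freeDelta base x z := fun x _ => rfl
      rw [Finset.sum_congr rfl hterm]
      exact congrFun (mySumFreeDelta h0 hfin.toFinset
        (fun z hz => hfin.mem_toFinset.mpr hz)) z
    show freeNorm base p ((∑ᶠ x, μ x • f x : myV M base) : M → ℝ) = freeNorm base p μ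
    rw [hfe, hval]
end
end

section
/- Let (M,d) be a metric space with base point 0. Then for every μ ∈ P(M), ‖μ‖_1 = sup { Σ_{x∈M} μ(x)·f(x) : f : M → ℝ, f(0) = 0, |f(x) − f(y)| ≤ d(x,y) for all x, y ∈ M }. (The Lipschitz-free norm on P(M) is dual to the space of 1-Lipschitz functions vanishing at the base point.) -/
open scoped BigOperators Classical

noncomputable section

namespace FreeNormAux

variable {M : Type*} [MetricSpace M] (base : M)

/-- Simplified description of the admissible set for `p = 1`. -/
def mySet (base : M) (μ : M → ℝ) : Set ℝ :=
  {r | ∃ (n : ℕ) (a : Fin n → ℝ) (x y : Fin n → M),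
    (∀ j, x j ≠ y j) ∧
    (∀ z, μ z = ∑ j, a j *
      ((freeDelta base (x j) z - freeDelta base (y j) z) / dist (x j) (y j))) ∧
    r = ∑ j, |a j|}

lemma freeNormSet_one_eq (μ : M → ℝ) :
    freeNormSet base Set.univ 1 μ = mySet base μ := by
  ext r
  constructor
  · rintro ⟨n, a, x, y, -, -, hxy, hμ, hr⟩
    exact ⟨n, a, x, y, hxy, fun z => congrFun hμ z, by
      rw [hr]; norm_num⟩
  · rintro ⟨n, a, x, y, hxy, hμ, hr⟩
    exact ⟨n, a, x, y, fun _ => trivial, fun _ => trivial, hxy, funext hμ, by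
      rw [hr]; norm_num⟩

lemma freeDelta_base_apply (z : M) : freeDelta base base z = 0 := by
  simp [freeDelta]

lemma freeDelta_apply_of_ne {x z : M} (h : z ≠ x) : freeDelta base x z = 0 := by
  simp [freeDelta, h]

lemma freeDelta_apply_base (x : M) : freeDelta base x base = 0 := by
  by_cases h : x = base
  · simp [freeDelta, h]
  · simp [freeDelta, h, Ne.symm h]

lemma mySet_nonneg (μ : M → ℝ) : ∀ r ∈ mySet base μ, 0 ≤ r := by
  rintro r ⟨n, a, x, y, -, -, rfl⟩
  exact Finset.sum_nonneg fun j _ => abs_nonneg _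

lemma mySet_bddBelow (μ : M → ℝ) : BddBelow (mySet base μ) :=
  ⟨0, fun r hr => mySet_nonneg base μ r hr⟩

lemma mySet_zero_mem : (0 : ℝ) ∈ mySet base (0 : M → ℝ) := by
  refine ⟨0, Fin.elim0, Fin.elim0, Fin.elim0, fun j => j.elim0, fun z => by simp, by simp⟩

lemma sum_delta_mul {f : M → ℝ} (hf0 : f base = 0) {T : Finset M} {x : M} (hx : x ∈ T) :
    ∑ z ∈ T, freeDelta base x z * f z = f x := by
  by_cases hxb : x = base
  · subst hxb
    simp [freeDelta_base_apply, hf0]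
  · have h : ∀ z ∈ T, freeDelta base x z * f z = if z = x then f z else 0 := by
      intro z _
      by_cases hzx : z = x
      · subst hzx; simp [freeDelta, hxb]
      · simp [freeDelta, hxb, hzx]
    rw [Finset.sum_congr rfl h, Finset.sum_ite_eq' T x f, if_pos hx]

lemma sum_delta_repr {μ : M → ℝ} (hfin : (Function.support μ).Finite) (hb : μ base = 0)
    (z : M) : μ z = ∑ x ∈ hfin.toFinset, μ x * freeDelta base x z := by
  have key : ∀ x ∈ hfin.toFinset, μ x * freeDelta base x z = if x = z then μ x else 0 := by
    intro x hx
    have hxs : μ x ≠ 0 := by simpa using hfin.mem_toFinset.1 hx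
    have hxb : x ≠ base := fun h => hxs (h ▸ hb)
    by_cases hzx : x = z
    · subst hzx; simp [freeDelta, hxb]
    · rw [freeDelta_apply_of_ne base (fun h => hzx h.symm), mul_zero, if_neg hzx]
  rw [Finset.sum_congr rfl key, Finset.sum_ite_eq' _ z μ]
  by_cases hz : z ∈ hfin.toFinset
  · rw [if_pos hz]
  · rw [if_neg hz]
    by_contra hzz
    exact hz (hfin.mem_toFinset.2 hzz)

lemma mySet_nonempty {μ : M → ℝ} (hfin : (Function.support μ).Finite) (hb : μ base = 0) :
    (mySet base μ).Nonempty := by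
  classical
  set s := hfin.toFinset with hs
  set e := s.equivFin with he
  have hxb : ∀ j : Fin s.card, ((e.symm j : M)) ≠ base := by
    intro j h
    have := (e.symm j).2
    rw [h] at this
    exact absurd hb (by simpa [hs] using this)
  refine ⟨∑ j, |μ ((e.symm j : M)) * dist ((e.symm j : M)) base|,
    s.card, fun j => μ ((e.symm j : M)) * dist ((e.symm j : M)) base,
    fun j => (e.symm j : M), fun _ => base, hxb, ?_, rfl⟩
  intro z
  rw [sum_delta_repr base hfin hb z,
    ← Finset.sum_coe_sort s (fun x => μ x * freeDelta base x z),
    ← Equiv.sum_comp e.symm (fun v : s => μ (v : M) * freeDelta base (v : M) z)]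
  refine Finset.sum_congr rfl fun j _ => ?_
  have hd : dist ((e.symm j : M)) base ≠ 0 := dist_ne_zero.2 (hxb j)
  rw [freeDelta_base_apply, sub_zero]
  field_simp

lemma mySet_add_mem {μ ν : M → ℝ} {r t : ℝ}
    (hr : r ∈ mySet base μ) (ht : t ∈ mySet base ν) :
    r + t ∈ mySet base (μ + ν) := by
  obtain ⟨n, a, x, y, hxy, hμ, rfl⟩ := hr
  obtain ⟨m, b, u, v, huv, hν, rfl⟩ := ht
  refine ⟨n + m, Fin.addCases a b, Fin.addCases x u, Fin.addCases y v, ?_, ?_, ?_⟩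
  · intro j
    refine Fin.addCases (motive := fun j =>
      Fin.addCases (motive := fun _ => M) x u j ≠ Fin.addCases (motive := fun _ => M) y v j)
      (fun i => by simpa using hxy i) (fun i => by simpa using huv i) j
  · intro z
    rw [Pi.add_apply, hμ z, hν z, Fin.sum_univ_add]
    simp
  · rw [Fin.sum_univ_add]
    simp

lemma mySet_smul_mem {μ : M → ℝ} {r : ℝ} (c : ℝ) (hr : r ∈ mySet base μ) :
    |c| * r ∈ mySet base (c • μ) := by
  obtain ⟨n, a, x, y, hxy, hμ, rfl⟩ := hr
  refine ⟨n, fun j => c * a j, x, y, hxy, fun z => ?_, ?_⟩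
  · rw [Pi.smul_apply, smul_eq_mul, hμ z, Finset.mul_sum]
    exact Finset.sum_congr rfl fun j _ => by ring
  · rw [Finset.mul_sum]
    exact Finset.sum_congr rfl fun j _ => (abs_mul c (a j)).symm

lemma pairing_le {μ f : M → ℝ} {r : ℝ} (hf0 : f base = 0)
    (hlip : ∀ x y, |f x - f y| ≤ dist x y) (hr : r ∈ mySet base μ) :
    ∑ᶠ z, μ z * f z ≤ r := by
  classical
  obtain ⟨n, a, x, y, hxy, hμ, rfl⟩ := hr
  set T : Finset M := Finset.image x Finset.univ ∪ Finset.image y Finset.univ with hT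
  have hxT : ∀ j, x j ∈ T := fun j =>
    Finset.mem_union_left _ (Finset.mem_image_of_mem x (Finset.mem_univ j))
  have hyT : ∀ j, y j ∈ T := fun j =>
    Finset.mem_union_right _ (Finset.mem_image_of_mem y (Finset.mem_univ j))
  have hsupp : Function.support (fun z => μ z * f z) ⊆ ↑T := by
    intro z hz
    by_contra hzT
    apply hz
    have hzx : ∀ j, z ≠ x j := fun j h => hzT (h ▸ hxT j)
    have hzy : ∀ j, z ≠ y j := fun j h => hzT (h ▸ hyT j)
    have : μ z = 0 := by
      rw [hμ z]
      refine Finset.sum_eq_zero fun j _ => ?_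
      rw [freeDelta_apply_of_ne base (hzx j), freeDelta_apply_of_ne base (hzy j)]
      simp
    simp [this]
  rw [finsum_eq_sum_of_support_subset _ hsupp]
  have key : ∀ j : Fin n,
      ∑ z ∈ T, (a j * ((freeDelta base (x j) z - freeDelta base (y j) z) /
        dist (x j) (y j))) * f z
      = (a j / dist (x j) (y j)) * (f (x j) - f (y j)) := by
    intro j
    have h : ∀ z ∈ T, (a j * ((freeDelta base (x j) z - freeDelta base (y j) z) /
        dist (x j) (y j))) * f z
        = (a j / dist (x j) (y j)) * (freeDelta base (x j) z * f z)
          - (a j / dist (x j) (y j)) * (freeDelta base (y j) z * f z) := fun z _ => by ring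
    rw [Finset.sum_congr rfl h, Finset.sum_sub_distrib, ← Finset.mul_sum, ← Finset.mul_sum,
      sum_delta_mul base hf0 (hxT j), sum_delta_mul base hf0 (hyT j)]
    ring
  have hstep : ∑ z ∈ T, μ z * f z
      = ∑ j, (a j / dist (x j) (y j)) * (f (x j) - f (y j)) := by
    rw [Finset.sum_congr rfl (fun z _ => by rw [hμ z, Finset.sum_mul]), Finset.sum_comm]
    exact Finset.sum_congr rfl fun j _ => key j
  rw [hstep]
  refine Finset.sum_le_sum fun j _ => ?_
  have hd : 0 < dist (x j) (y j) := dist_pos.2 (hxy j)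
  have h1 : |(a j / dist (x j) (y j)) * (f (x j) - f (y j))| ≤ |a j| := by
    rw [abs_mul, abs_div, abs_of_pos hd]
    calc |a j| / dist (x j) (y j) * |f (x j) - f (y j)|
        ≤ |a j| / dist (x j) (y j) * dist (x j) (y j) := by
          refine mul_le_mul_of_nonneg_left (hlip _ _) ?_
          positivity
      _ = |a j| := div_mul_cancel₀ _ hd.ne'
  exact le_trans (le_abs_self _) h1

/-- The submodule of finitely supported functions vanishing at the base point. -/
def freeSpace (base : M) : Submodule ℝ (M → ℝ) where
  carrier := {g | (Function.support g).Finite ∧ g base = 0}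
  add_mem' := fun {f g} hf hg =>
    ⟨(hf.1.union hg.1).subset (Function.support_add _ _), by
      simp [Pi.add_apply, hf.2, hg.2]⟩
  zero_mem' := ⟨by simp, rfl⟩
  smul_mem' := fun c f hf =>
    ⟨hf.1.subset (fun z hz h => hz (by simp [Pi.smul_apply, h])), by
      simp [Pi.smul_apply, hf.2]⟩

lemma mem_freeSpace {g : M → ℝ} :
    g ∈ freeSpace base ↔ (Function.support g).Finite ∧ g base = 0 := Iff.rfl

lemma freeDelta_mem (x : M) : freeDelta base x ∈ freeSpace base := by
  rw [mem_freeSpace]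
  constructor
  · refine (Set.finite_singleton x).subset fun z hz => ?_
    by_contra h
    exact hz (freeDelta_apply_of_ne base h)
  · exact freeDelta_apply_base base x

end FreeNormAux

open FreeNormAux in
/-- Duality for the free norm: `‖μ‖_1` is the supremum of the pairings
of `μ` with `1`-Lipschitz functions vanishing at the base point. -/
theorem freeNorm_one_eq_sSup_pairings {M : Type*} [MetricSpace M] (base : M)
    (μ : M → ℝ) (hfin : (Function.support μ).Finite) (hb : μ base = 0) :
    freeNorm base 1 μ = sSup {r : ℝ | ∃ f : M → ℝ, f base = 0 ∧
      (∀ x y, |f x - f y| ≤ dist x y) ∧ r = ∑ᶠ x, μ x * f x} := by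
  classical
  have hset : freeNorm base 1 μ = sInf (mySet base μ) := by
    unfold freeNorm freeNormOn
    rw [freeNormSet_one_eq]
  -- the ambient module
  set E := freeSpace base with hE
  have hμE : μ ∈ E := (mem_freeSpace base).2 ⟨hfin, hb⟩
  -- the sublinear functional
  set Q : E → ℝ := fun v => sInf (mySet base (v : M → ℝ)) with hQdef
  have hne : ∀ v : E, (mySet base (v : M → ℝ)).Nonempty := fun v =>
    mySet_nonempty base ((mem_freeSpace base).1 v.2).1 ((mem_freeSpace base).1 v.2).2
  have hQ0 : ∀ v, 0 ≤ Q v := fun v =>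
    le_csInf (hne v) fun r hr => mySet_nonneg base _ r hr
  have hQadd : ∀ u v : E, Q (u + v) ≤ Q u + Q v := by
    intro u v
    have h1 : ∀ r ∈ mySet base (u : M → ℝ), ∀ t ∈ mySet base (v : M → ℝ),
        Q (u + v) ≤ r + t := by
      intro r hr t ht
      refine csInf_le (mySet_bddBelow base _) ?_
      have := mySet_add_mem base hr ht
      simpa using this
    have h2 : Q (u + v) - Q v ≤ Q u := by
      refine le_csInf (hne u) fun r hr => ?_
      have h3 : Q (u + v) - r ≤ Q v := by
        refine le_csInf (hne v) fun t ht => ?_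
        linarith [h1 r hr t ht]
      linarith
    linarith
  have hQsmul : ∀ (c : ℝ) (v : E), Q (c • v) ≤ |c| * Q v := by
    intro c v
    rcases eq_or_ne c 0 with rfl | hc
    · have hz : ((0 : ℝ) • v : E) = 0 := zero_smul _ _
      rw [hz]
      have h0 : Q (0 : E) ≤ 0 := by
        refine csInf_le (mySet_bddBelow base _) ?_
        simpa using mySet_zero_mem base
      simpa using h0
    · have h1 : ∀ r ∈ mySet base (v : M → ℝ), Q (c • v) ≤ |c| * r := by
        intro r hr
        refine csInf_le (mySet_bddBelow base _) ?_
        have := mySet_smul_mem base c hr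
        simpa using this
      have h2 : Q (c • v) / |c| ≤ Q v := by
        refine le_csInf (hne v) fun r hr => ?_
        rw [div_le_iff₀ (abs_pos.2 hc)]
        rw [mul_comm]
        exact h1 r hr
      calc Q (c • v) = Q (c • v) / |c| * |c| := (div_mul_cancel₀ _ (abs_ne_zero.2 hc)).symm
        _ ≤ Q v * |c| := mul_le_mul_of_nonneg_right h2 (abs_nonneg c)
        _ = |c| * Q v := mul_comm _ _
  have N_hom : ∀ c : ℝ, 0 < c → ∀ v : E, Q (c • v) = c * Q v := by
    intro c hc v
    refine le_antisymm ?_ ?_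
    · calc Q (c • v) ≤ |c| * Q v := hQsmul c v
        _ = c * Q v := by rw [abs_of_pos hc]
    · have h1 : Q v ≤ |c⁻¹| * Q (c • v) := by
        have := hQsmul c⁻¹ (c • v)
        rwa [inv_smul_smul₀ (ne_of_gt hc)] at this
      rw [abs_of_pos (inv_pos.2 hc)] at h1
      calc c * Q v ≤ c * (c⁻¹ * Q (c • v)) := mul_le_mul_of_nonneg_left h1 (le_of_lt hc)
        _ = Q (c • v) := by field_simp
  -- the partial linear map on the span of μ
  have H : ∀ c : ℝ, c • (⟨μ, hμE⟩ : E) = 0 → c • sInf (mySet base μ) = 0 := by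
    intro c hc
    rcases smul_eq_zero.1 hc with h | h
    · rw [h, zero_smul]
    · have hμ0 : μ = 0 := congrArg Subtype.val h
      have hv : sInf (mySet base μ) = 0 := by
        refine le_antisymm ?_ ?_
        · refine csInf_le (mySet_bddBelow base _) ?_
          rw [hμ0]
          exact mySet_zero_mem base
        · exact le_csInf (mySet_nonempty base hfin hb) fun r hr =>
            mySet_nonneg base _ r hr
      rw [hv, smul_zero]
  have hf : ∀ xd : (LinearPMap.mkSpanSingleton' (σ := RingHom.id ℝ) (⟨μ, hμE⟩ : E)
      (sInf (mySet base μ)) H).domain,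
      (LinearPMap.mkSpanSingleton' (σ := RingHom.id ℝ) (⟨μ, hμE⟩ : E) (sInf (mySet base μ)) H) xd ≤ Q xd := by
    intro xd
    obtain ⟨c, hc⟩ := Submodule.mem_span_singleton.1 xd.2
    have hxd : xd = ⟨c • (⟨μ, hμE⟩ : E), hc ▸ xd.2⟩ := Subtype.ext hc.symm
    rw [hxd, LinearPMap.mkSpanSingleton'_apply]
    rcases le_or_gt c 0 with h | h
    · have hle : c • sInf (mySet base μ) ≤ 0 := by
        rw [smul_eq_mul]
        exact mul_nonpos_of_nonpos_of_nonneg h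
          (le_csInf (mySet_nonempty base hfin hb) fun r hr => mySet_nonneg base _ r hr)
      exact le_trans hle (hQ0 _)
    · rw [N_hom c h ⟨μ, hμE⟩, smul_eq_mul, RingHom.id_apply]
  obtain ⟨g, hg_eq, hg_le⟩ := exists_extension_of_le_sublinear
    (LinearPMap.mkSpanSingleton' (σ := RingHom.id ℝ) (⟨μ, hμE⟩ : E) (sInf (mySet base μ)) H) Q N_hom hQadd hf
  have hgself : g ⟨μ, hμE⟩ = sInf (mySet base μ) := by
    have hm : (⟨μ, hμE⟩ : E) ∈ (LinearPMap.mkSpanSingleton' (σ := RingHom.id ℝ) (⟨μ, hμE⟩ : E)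
        (sInf (mySet base μ)) H).domain := Submodule.mem_span_singleton_self _
    have h := hg_eq ⟨⟨μ, hμE⟩, hm⟩
    rwa [LinearPMap.mkSpanSingleton'_apply_self] at h
  -- the Lipschitz function
  set f : M → ℝ := fun z => g ⟨freeDelta base z, freeDelta_mem base z⟩ with hfdef
  have hf0 : f base = 0 := by
    have hz : (⟨freeDelta base base, freeDelta_mem base base⟩ : E) = 0 := by
      apply Subtype.ext
      funext z
      simpa using freeDelta_base_apply base z
    rw [hfdef]
    simp only
    rw [hz, map_zero]
  have hQdelta : ∀ x y : M,
      Q (⟨freeDelta base x, freeDelta_mem base x⟩ - ⟨freeDelta base y, freeDelta_mem base y⟩)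
        ≤ dist x y := by
    intro x y
    rcases eq_or_ne x y with rfl | hxy
    · have hz : (⟨freeDelta base x, freeDelta_mem base x⟩ -
          ⟨freeDelta base x, freeDelta_mem base x⟩ : E) = 0 := sub_self _
      rw [hz]
      refine le_trans ?_ dist_nonneg
      refine csInf_le (mySet_bddBelow base _) ?_
      simpa using mySet_zero_mem base
    · refine csInf_le (mySet_bddBelow base _) ?_
      have hd : dist x y ≠ 0 := dist_ne_zero.2 hxy
      refine ⟨1, fun _ => dist x y, fun _ => x, fun _ => y, fun _ => hxy, fun z => ?_, ?_⟩
      · rw [Fin.sum_univ_one]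
        have : ((⟨freeDelta base x, freeDelta_mem base x⟩ -
            ⟨freeDelta base y, freeDelta_mem base y⟩ : E) : M → ℝ) z
            = freeDelta base x z - freeDelta base y z := rfl
        rw [this, mul_div_cancel₀ _ hd]
      · rw [Fin.sum_univ_one, abs_of_nonneg dist_nonneg]
  have hlip : ∀ x y, |f x - f y| ≤ dist x y := by
    intro x y
    rw [abs_sub_le_iff]
    constructor
    · have := le_trans (hg_le _) (hQdelta x y)
      rwa [map_sub] at this
    · have := le_trans (hg_le _) (hQdelta y x)
      rw [map_sub] at this
      rwa [dist_comm] at this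
  -- the pairing computation
  have hdecomp : (⟨μ, hμE⟩ : E) = ∑ x ∈ hfin.toFinset,
      μ x • (⟨freeDelta base x, freeDelta_mem base x⟩ : E) := by
    apply Subtype.ext
    rw [AddSubmonoidClass.coe_finset_sum]
    funext z
    rw [Finset.sum_apply]
    exact sum_delta_repr base hfin hb z
  have hgμ2 : g ⟨μ, hμE⟩ = ∑ x ∈ hfin.toFinset, μ x * f x := by
    rw [hdecomp, map_sum]
    exact Finset.sum_congr rfl fun x _ => by rw [map_smul, smul_eq_mul]
  have hpair : ∑ᶠ z, μ z * f z = ∑ x ∈ hfin.toFinset, μ x * f x := by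
    refine finsum_eq_sum_of_support_subset _ ?_
    intro z hz
    have : μ z ≠ 0 := left_ne_zero_of_mul hz
    simpa using this
  -- conclusion
  rw [hset]
  set S := {r : ℝ | ∃ f : M → ℝ, f base = 0 ∧
      (∀ x y, |f x - f y| ≤ dist x y) ∧ r = ∑ᶠ x, μ x * f x} with hS
  have hmem : sInf (mySet base μ) ∈ S := by
    refine ⟨f, hf0, hlip, ?_⟩
    rw [hpair, ← hgμ2]
    exact hgself.symm
  have hub : ∀ p ∈ S, p ≤ sInf (mySet base μ) := by
    rintro p ⟨f', h0, hl, rfl⟩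
    exact le_csInf (mySet_nonempty base hfin hb) fun r hr => pairing_le base h0 hl hr
  exact le_antisymm (le_csSup ⟨sInf (mySet base μ), hub⟩ hmem) (csSup_le ⟨_, hmem⟩ hub)
end
end
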